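/- Let Ω be a finite set and let γ : P^m → Pow(Ω) be a function from m-tuples of strictly positive probability mass functions on Ω to subsets of Ω. Suppose γ is strategy-proof in the maximizing sense: for every profile p, every agent i, and every alternative belief p'_i, we have p_i(γ(p)) ≥ p_i(γ(p'_i, p_{−i})). Then any two distinct events E, E' in the range of γ are non-nested: E ∖ E' ≠ ∅ and E' ∖ E ≠ ∅. -/

import Mathlib

/-- A strictly positive, normalized, event-injective belief. -/
def IsBelief {Ω : Type*} [Fintype Ω] (r : Ω → ℝ) : Prop :=
  (∀ ω, 0 < r ω) ∧ (∑ ω, r ω = 1) ∧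
  ∀ A B : Finset Ω, (∑ ω ∈ A, r ω) = (∑ ω ∈ B, r ω) → A = B

private lemma sum_range_two_pow_lt (i : ℕ) : ∑ j ∈ Finset.range i, 2 ^ j < 2 ^ i := by
  induction i with
  | zero => simp
  | succ n ih => rw [Finset.sum_range_succ, pow_succ]; omega

private lemma sum_two_pow_lt {S : Finset ℕ} {i : ℕ} (h : ∀ j ∈ S, j < i) :
    ∑ j ∈ S, 2 ^ j < 2 ^ i :=
  lt_of_le_of_lt
    (Finset.sum_le_sum_of_subset (fun j hj => Finset.mem_range.2 (h j hj)))
    (sum_range_two_pow_lt i)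

private lemma two_pow_sum_injective :
    ∀ (N : ℕ) (S T : Finset ℕ), (∀ j ∈ S, j < N) → (∀ j ∈ T, j < N) →
    (∑ j ∈ S, 2 ^ j) = (∑ j ∈ T, 2 ^ j) → S = T := by
  intro N
  induction N with
  | zero =>
    intro S T hS hT _
    have h1 : S = ∅ := Finset.eq_empty_of_forall_notMem fun j hj => absurd (hS j hj) (Nat.not_lt_zero j)
    have h2 : T = ∅ := Finset.eq_empty_of_forall_notMem fun j hj => absurd (hT j hj) (Nat.not_lt_zero j)
    rw [h1, h2]
  | succ n ih =>
    intro S T hS hT hsum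
    by_cases hSn : n ∈ S <;> by_cases hTn : n ∈ T
    · -- both contain n
      have hS' : ∑ j ∈ S.erase n, 2 ^ j + 2 ^ n = ∑ j ∈ S, 2 ^ j := Finset.sum_erase_add _ _ hSn
      have hT' : ∑ j ∈ T.erase n, 2 ^ j + 2 ^ n = ∑ j ∈ T, 2 ^ j := Finset.sum_erase_add _ _ hTn
      have heq : S.erase n = T.erase n := by
        apply ih
        · intro j hj
          have := Finset.ne_of_mem_erase hj
          have := hS j (Finset.mem_of_mem_erase hj); omega
        · intro j hj
          have := Finset.ne_of_mem_erase hj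
          have := hT j (Finset.mem_of_mem_erase hj); omega
        · omega
      rw [← Finset.insert_erase hSn, ← Finset.insert_erase hTn, heq]
    · -- n ∈ S, n ∉ T : contradiction
      exfalso
      have h1 : (2:ℕ) ^ n ≤ ∑ j ∈ S, 2 ^ j := Finset.single_le_sum (fun j _ => Nat.zero_le _) hSn
      have h2 : ∑ j ∈ T, 2 ^ j < 2 ^ n := sum_two_pow_lt (fun j hj => by
        have := hT j hj
        have : j ≠ n := fun h => hTn (h ▸ hj)
        omega)
      omega
    · exfalso
      have h1 : (2:ℕ) ^ n ≤ ∑ j ∈ T, 2 ^ j := Finset.single_le_sum (fun j _ => Nat.zero_le _) hTn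
      have h2 : ∑ j ∈ S, 2 ^ j < 2 ^ n := sum_two_pow_lt (fun j hj => by
        have := hS j hj
        have : j ≠ n := fun h => hSn (h ▸ hj)
        omega)
      omega
    · apply ih
      · intro j hj
        have := hS j hj
        have : j ≠ n := fun h => hSn (h ▸ hj)
        omega
      · intro j hj
        have := hT j hj
        have : j ≠ n := fun h => hTn (h ▸ hj)
        omega
      · exact hsum

/-- If every point of `D` carries more `r`-mass than the whole complement of `D`,
then any event with at least as much mass as `D` must contain `D`. -/
private lemma subset_of_sum_le {Ω : Type*} [Fintype Ω] [DecidableEq Ω] (r : Ω → ℝ)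
    (hr : ∀ ω, 0 < r ω) (D B : Finset Ω)
    (hD : ∀ ω ∈ D, ∑ ω' ∈ Dᶜ, r ω' < r ω)
    (hle : ∑ ω ∈ D, r ω ≤ ∑ ω ∈ B, r ω) : D ⊆ B := by
  by_contra hsub
  obtain ⟨ω, hωD, hωB⟩ := Finset.not_subset.1 hsub
  have h1 : ∑ ω' ∈ B ∩ D, r ω' ≤ ∑ ω' ∈ D.erase ω, r ω' := by
    apply Finset.sum_le_sum_of_subset_of_nonneg
    · intro x hx
      rw [Finset.mem_inter] at hx
      exact Finset.mem_erase.2 ⟨fun h => hωB (h ▸ hx.1), hx.2⟩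
    · exact fun x _ _ => (hr x).le
  have h2 : ∑ ω' ∈ B \ D, r ω' ≤ ∑ ω' ∈ Dᶜ, r ω' := by
    apply Finset.sum_le_sum_of_subset_of_nonneg
    · intro x hx
      rw [Finset.mem_sdiff] at hx
      exact Finset.mem_compl.2 hx.2
    · exact fun x _ _ => (hr x).le
  have h3 : ∑ ω' ∈ B, r ω' = ∑ ω' ∈ B ∩ D, r ω' + ∑ ω' ∈ B \ D, r ω' :=
    (Finset.sum_inter_add_sum_sdiff B D r).symm
  have h4 : ∑ ω' ∈ D.erase ω, r ω' = ∑ ω' ∈ D, r ω' - r ω :=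
    Finset.sum_erase_eq_sub hωD
  have h5 := hD ω hωD
  linarith

private lemma exists_concentrated_belief {Ω : Type*} [Fintype Ω] [DecidableEq Ω] [Nonempty Ω]
    (E E' : Finset Ω) (hEE' : E ⊆ E') :
    ∃ r : Ω → ℝ,
      ((∀ ω, 0 < r ω) ∧ (∑ ω, r ω = 1) ∧
        ∀ A B : Finset Ω, (∑ ω ∈ A, r ω) = (∑ ω ∈ B, r ω) → A = B) ∧
      (∀ ω ∈ E, ∑ ω' ∈ Eᶜ, r ω' < r ω) ∧
      (∀ ω ∈ E', ∑ ω' ∈ E'ᶜ, r ω' < r ω) := by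
  classical
  set n := Fintype.card Ω with hn_def
  have hn : 0 < n := Fintype.card_pos
  set e := Fintype.equivFin Ω with he_def
  set lvl : Ω → ℕ := fun ω => if ω ∈ E then 2 else if ω ∈ E' then 1 else 0 with hlvl_def
  set idx : Ω → ℕ := fun ω => n * lvl ω + (e ω).val with hidx_def
  have hval : ∀ ω, (e ω).val < n := fun ω => (e ω).isLt
  have hlvl_le : ∀ ω, lvl ω ≤ 2 := by
    intro ω; simp only [hlvl_def]; split <;> [omega; split <;> omega]
  have hmono : ∀ ω ω', lvl ω < lvl ω' → idx ω < idx ω' := by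
    intro ω ω' h
    have h1 : lvl ω + 1 ≤ lvl ω' := h
    have h2 : n * (lvl ω + 1) ≤ n * lvl ω' := Nat.mul_le_mul_left n h1
    have := hval ω
    simp only [hidx_def]
    have : n * lvl ω + (e ω).val < n * (lvl ω + 1) := by
      rw [Nat.mul_add, Nat.mul_one]; omega
    omega
  have hidx_inj : Function.Injective idx := by
    intro ω ω' h
    rcases lt_trichotomy (lvl ω) (lvl ω') with hl | hl | hl
    · exact absurd h (Nat.ne_of_lt (hmono _ _ hl))
    · have hv : (e ω).val = (e ω').val := by
        simp only [hidx_def, hl] at h; omega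
      exact e.injective (Fin.ext hv)
    · exact absurd h.symm (Nat.ne_of_lt (hmono _ _ hl))
  have hidx_lt : ∀ ω, idx ω < 3 * n := by
    intro ω
    have := hlvl_le ω
    have := hval ω
    have : n * lvl ω ≤ n * 2 := Nat.mul_le_mul_left n (hlvl_le ω)
    simp only [hidx_def]; omega
  -- sums of powers of two over events
  have hsum_image : ∀ A : Finset Ω, ∑ ω ∈ A, (2:ℕ) ^ idx ω = ∑ j ∈ A.image idx, 2 ^ j := by
    intro A
    rw [Finset.sum_image (fun x _ y _ h => hidx_inj h)]
  have hsum_lt : ∀ (S : Finset Ω) (i : ℕ), (∀ ω ∈ S, idx ω < i) →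
      ∑ ω ∈ S, (2:ℕ) ^ idx ω < 2 ^ i := by
    intro S i h
    rw [hsum_image]
    exact sum_two_pow_lt (fun j hj => by
      obtain ⟨ω, hω, rfl⟩ := Finset.mem_image.1 hj
      exact h ω hω)
  have hnat_inj : ∀ A B : Finset Ω,
      (∑ ω ∈ A, (2:ℕ) ^ idx ω) = ∑ ω ∈ B, (2:ℕ) ^ idx ω → A = B := by
    intro A B h
    rw [hsum_image, hsum_image] at h
    have himg : A.image idx = B.image idx := by
      apply two_pow_sum_injective (3 * n)
      · intro j hj
        obtain ⟨ω, _, rfl⟩ := Finset.mem_image.1 hj; exact hidx_lt ω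
      · intro j hj
        obtain ⟨ω, _, rfl⟩ := Finset.mem_image.1 hj; exact hidx_lt ω
      · exact h
    exact Finset.image_injective hidx_inj himg
  -- the real belief
  set T : ℝ := ((∑ ω : Ω, 2 ^ idx ω : ℕ) : ℝ) with hT_def
  have hT : 0 < T := by
    rw [hT_def]
    have : 0 < ∑ ω : Ω, 2 ^ idx ω :=
      Finset.sum_pos (fun ω _ => Nat.pow_pos (by norm_num)) Finset.univ_nonempty
    exact_mod_cast this
  refine ⟨fun ω => ((2 ^ idx ω : ℕ) : ℝ) / T, ⟨?_, ?_, ?_⟩, ?_, ?_⟩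
  · intro ω
    apply div_pos _ hT
    exact_mod_cast Nat.pow_pos (by norm_num)
  · rw [← Finset.sum_div]
    rw [div_eq_one_iff_eq (ne_of_gt hT)]
    rw [hT_def]
    push_cast
    ring
  · intro A B h
    apply hnat_inj
    rw [← Finset.sum_div, ← Finset.sum_div, div_eq_div_iff (ne_of_gt hT) (ne_of_gt hT)] at h
    have h' : ((∑ ω ∈ A, 2 ^ idx ω : ℕ) : ℝ) = ((∑ ω ∈ B, 2 ^ idx ω : ℕ) : ℝ) := by
      push_cast
      push_cast at h
      exact mul_right_cancel₀ (ne_of_gt hT) h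
    exact_mod_cast h'
  · -- concentration on E
    intro ω hω
    rw [← Finset.sum_div]
    apply div_lt_div_of_pos_right _ hT
    have hlt : ∑ ω' ∈ Eᶜ, (2:ℕ) ^ idx ω' < 2 ^ idx ω := by
      apply hsum_lt
      intro ω' hω'
      apply hmono
      have h1 : lvl ω = 2 := by simp only [hlvl_def, if_pos hω]
      have h2 : lvl ω' ≤ 1 := by
        have hω'E : ω' ∉ E := Finset.mem_compl.1 hω'
        simp only [hlvl_def, if_neg hω'E]; split <;> omega
      omega
    calc ∑ ω' ∈ Eᶜ, ((2 ^ idx ω' : ℕ) : ℝ) = ((∑ ω' ∈ Eᶜ, 2 ^ idx ω' : ℕ) : ℝ) := by push_cast; ring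
    _ < ((2 ^ idx ω : ℕ) : ℝ) := by exact_mod_cast hlt
  · -- concentration on E'
    intro ω hω
    rw [← Finset.sum_div]
    apply div_lt_div_of_pos_right _ hT
    have hlt : ∑ ω' ∈ E'ᶜ, (2:ℕ) ^ idx ω' < 2 ^ idx ω := by
      apply hsum_lt
      intro ω' hω'
      apply hmono
      have hω'E' : ω' ∉ E' := Finset.mem_compl.1 hω'
      have hω'E : ω' ∉ E := fun h => hω'E' (hEE' h)
      have h1 : lvl ω' = 0 := by simp only [hlvl_def, if_neg hω'E, if_neg hω'E']
      have h2 : 1 ≤ lvl ω := by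
        simp only [hlvl_def]; split
        · omega
        · simp [hω]
      omega
    calc ∑ ω' ∈ E'ᶜ, ((2 ^ idx ω' : ℕ) : ℝ) = ((∑ ω' ∈ E'ᶜ, 2 ^ idx ω' : ℕ) : ℝ) := by push_cast; ring
    _ < ((2 ^ idx ω : ℕ) : ℝ) := by exact_mod_cast hlt

private lemma key_nested {Ω : Type*} [Fintype Ω] [DecidableEq Ω] (m : ℕ)
    (γ : (Fin m → (Ω → ℝ)) → Finset Ω)
    (hSP : ∀ p : Fin m → (Ω → ℝ), (∀ i, IsBelief (p i)) →
      ∀ (i : Fin m) (p' : Ω → ℝ), IsBelief p' →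
        ∑ ω ∈ γ (Function.update p i p'), p i ω ≤ ∑ ω ∈ γ p, p i ω)
    (E E' : Finset Ω)
    (hE : ∃ p, (∀ i, IsBelief (p i)) ∧ γ p = E)
    (hE' : ∃ p, (∀ i, IsBelief (p i)) ∧ γ p = E')
    (hEE' : E ⊆ E') : E = E' := by
  classical
  rcases isEmpty_or_nonempty Ω with hΩ | hΩ
  · have h1 : E = ∅ := Finset.eq_empty_of_forall_notMem (fun ω _ => (hΩ.false ω).elim)
    have h2 : E' = ∅ := Finset.eq_empty_of_forall_notMem (fun ω _ => (hΩ.false ω).elim)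
    rw [h1, h2]
  obtain ⟨p, hp, hγp⟩ := hE
  obtain ⟨q, hq, hγq⟩ := hE'
  obtain ⟨r, hrB, hrE, hrE'⟩ := exists_concentrated_belief E E' hEE'
  have hr : IsBelief r := hrB
  set s : ℕ → Fin m → Ω → ℝ := fun k i => if (i : ℕ) < k then r else q i with hs_def
  set t : ℕ → Fin m → Ω → ℝ := fun k i => if (i : ℕ) < k then r else p i with ht_def
  have hs_bel : ∀ k i, IsBelief (s k i) := by
    intro k i; simp only [hs_def]; split
    · exact hr
    · exact hq i
  have ht_bel : ∀ k i, IsBelief (t k i) := by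
    intro k i; simp only [ht_def]; split
    · exact hr
    · exact hp i
  have hs_at : ∀ (k : ℕ) (hk : k < m), s (k+1) ⟨k, hk⟩ = r := by
    intro k hk; simp [hs_def]
  have ht_at : ∀ (k : ℕ) (hk : k < m), t (k+1) ⟨k, hk⟩ = r := by
    intro k hk; simp [ht_def]
  have ht_at' : ∀ (k : ℕ) (hk : k < m), t k ⟨k, hk⟩ = p ⟨k, hk⟩ := by
    intro k hk; simp [ht_def]
  have hs_upd_down : ∀ (k : ℕ) (hk : k < m),
      Function.update (s (k+1)) ⟨k, hk⟩ (q ⟨k, hk⟩) = s k := by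
    intro k hk; funext j
    rcases eq_or_ne j ⟨k, hk⟩ with rfl | hj
    · rw [Function.update_self]
      simp [hs_def]
    · rw [Function.update_of_ne hj]
      have hjk : (j : ℕ) ≠ k := fun h => hj (Fin.ext h)
      simp only [hs_def]
      by_cases hlt : (j : ℕ) < k
      · rw [if_pos (by omega), if_pos hlt]
      · rw [if_neg (by omega), if_neg hlt]
  have ht_upd_down : ∀ (k : ℕ) (hk : k < m),
      Function.update (t (k+1)) ⟨k, hk⟩ (p ⟨k, hk⟩) = t k := by
    intro k hk; funext j
    rcases eq_or_ne j ⟨k, hk⟩ with rfl | hj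
    · rw [Function.update_self]
      simp [ht_def]
    · rw [Function.update_of_ne hj]
      have hjk : (j : ℕ) ≠ k := fun h => hj (Fin.ext h)
      simp only [ht_def]
      by_cases hlt : (j : ℕ) < k
      · rw [if_pos (by omega), if_pos hlt]
      · rw [if_neg (by omega), if_neg hlt]
  have ht_upd_up : ∀ (k : ℕ) (hk : k < m),
      Function.update (t k) ⟨k, hk⟩ r = t (k+1) := by
    intro k hk; funext j
    rcases eq_or_ne j ⟨k, hk⟩ with rfl | hj
    · rw [Function.update_self]
      simp [ht_def]
    · rw [Function.update_of_ne hj]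
      have hjk : (j : ℕ) ≠ k := fun h => hj (Fin.ext h)
      simp only [ht_def]
      by_cases hlt : (j : ℕ) < k
      · rw [if_pos hlt, if_pos (by omega)]
      · rw [if_neg hlt, if_neg (by omega)]
  -- q-side chain: E' stays inside the chosen event
  have hq_side : ∀ k, k ≤ m → E' ⊆ γ (s k) := by
    intro k
    induction k with
    | zero =>
      intro _
      have h0 : s 0 = q := by funext i; simp [hs_def]
      rw [h0, hγq]
    | succ k ih =>
      intro hk1
      have hk : k < m := hk1
      have h1 := hSP (s (k+1)) (hs_bel (k+1)) ⟨k, hk⟩ (q ⟨k, hk⟩) (hq ⟨k, hk⟩)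
      rw [hs_upd_down k hk, hs_at k hk] at h1
      have h3 : ∑ ω ∈ E', r ω ≤ ∑ ω ∈ γ (s k), r ω :=
        Finset.sum_le_sum_of_subset_of_nonneg (ih (le_of_lt hk))
          (fun x _ _ => (hrB.1 x).le)
      exact subset_of_sum_le r hrB.1 E' _ hrE' (le_trans h3 h1)
  -- p-side chain: the chosen event stays equal to E
  have hp_side : ∀ k, k ≤ m → γ (t k) = E := by
    intro k
    induction k with
    | zero =>
      intro _
      have h0 : t 0 = p := by funext i; simp [ht_def]
      rw [h0, hγp]
    | succ k ih =>
      intro hk1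
      have hk : k < m := hk1
      have hih := ih (le_of_lt hk)
      have h1 := hSP (t (k+1)) (ht_bel (k+1)) ⟨k, hk⟩ (p ⟨k, hk⟩) (hp ⟨k, hk⟩)
      rw [ht_upd_down k hk, ht_at k hk, hih] at h1
      have hEB : E ⊆ γ (t (k+1)) := subset_of_sum_le r hrB.1 E _ hrE h1
      have h2 := hSP (t k) (ht_bel k) ⟨k, hk⟩ r hr
      rw [ht_upd_up k hk, ht_at' k hk, hih] at h2
      have h3 : ∑ ω ∈ E, p ⟨k, hk⟩ ω ≤ ∑ ω ∈ γ (t (k+1)), p ⟨k, hk⟩ ω :=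
        Finset.sum_le_sum_of_subset_of_nonneg hEB
          (fun x _ _ => ((hp ⟨k, hk⟩).1 x).le)
      exact (hp ⟨k, hk⟩).2.2 _ E (le_antisymm h2 h3)
  have hsm : s m = t m := by
    funext i; simp [hs_def, ht_def, i.isLt]
  have hfin : E' ⊆ E := by
    have := hq_side m le_rfl
    rwa [hsm, hp_side m le_rfl] at this
  exact Finset.Subset.antisymm hEE' hfin

/-- Any two distinct events in the range of a strategy-proof event selector are
non-nested. -/
theorem stmt3 {Ω : Type*} [Fintype Ω] [DecidableEq Ω] (m : ℕ)
    (γ : (Fin m → (Ω → ℝ)) → Finset Ω)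
    (hSP : ∀ p : Fin m → (Ω → ℝ), (∀ i, IsBelief (p i)) →
      ∀ (i : Fin m) (p' : Ω → ℝ), IsBelief p' →
        ∑ ω ∈ γ (Function.update p i p'), p i ω ≤ ∑ ω ∈ γ p, p i ω)
    (E E' : Finset Ω)
    (hE : ∃ p, (∀ i, IsBelief (p i)) ∧ γ p = E)
    (hE' : ∃ p, (∀ i, IsBelief (p i)) ∧ γ p = E')
    (hne : E ≠ E') :
    (E \ E').Nonempty ∧ (E' \ E).Nonempty := by

  constructor
  · rw [Finset.sdiff_nonempty]
    intro h
    exact hne (key_nested m γ hSP E E' hE hE' h)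
  · rw [Finset.sdiff_nonempty]
    intro h
    exact hne (key_nested m γ hSP E' E hE' hE h).symm
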